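/- Let K be an algebraically closed field of characteristic zero, S the field of Puiseux series over K in T, and B = (b_1,...,b_m) polynomials in K[T][X_1,...,X_n]. Suppose Φ and Φ' are two distinct vectors of bounded Puiseux series which are roots of B (viewing B over S), both with the same limit φ at T = 0, and suppose the Jacobian matrix of some n of the polynomials b_1(0,·),...,b_m(0,·) with respect to X is invertible at φ. Then Φ = Φ', a contradiction; i.e., distinct bounded Puiseux roots of B with invertible limit Jacobian have distinct limits at T = 0. -/

import Mathlib

open MvPolynomial

/-- Evaluation of a polynomial in `K[T][X₁,…,Xₙ]` at a vector of Hahn/Puiseux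
series (sending `T` to the series `T = single 1 1`). -/
noncomputable def evalSeries {K : Type*} [Field K] {n : ℕ}
    (Φ : Fin n → HahnSeries ℚ K) (f : MvPolynomial (Fin n) (Polynomial K)) :
    HahnSeries ℚ K :=
  MvPolynomial.eval₂
    ((Polynomial.aeval (HahnSeries.single (1 : ℚ) (1 : K))).toRingHom) Φ f


namespace Stmt11Aux

open HahnSeries

variable {K : Type*} [Field K]

theorem orderTop_nonneg_of_support {x : HahnSeries ℚ K}
    (h : ∀ q ∈ x.support, (0:ℚ) ≤ q) : 0 ≤ x.orderTop := by
  by_cases hx : x = 0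
  · simp [hx]
  · rw [← order_eq_orderTop_of_ne_zero hx]
    exact_mod_cast h _ ((mem_support _ _).2 (coeff_order_eq_zero.not.mpr hx))

theorem orderTop_pos_of {x : HahnSeries ℚ K}
    (h : ∀ q ≤ (0:ℚ), x.coeff q = 0) : 0 < x.orderTop := by
  by_cases hx : x = 0
  · simp [hx]
  · rw [← order_eq_orderTop_of_ne_zero hx]
    have : 0 < x.order := lt_of_not_ge fun hle => coeff_order_eq_zero.not.mpr hx (h _ hle)
    exact_mod_cast this

variable (K) in
/-- The subring of bounded (nonnegative order) Hahn series. -/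
def A : Subring (HahnSeries ℚ K) where
  carrier := {x | 0 ≤ x.orderTop}
  zero_mem' := by simp
  one_mem' := show 0 ≤ (1 : HahnSeries ℚ K).orderTop from le_of_eq orderTop_one.symm
  add_mem' {x y} hx hy := show 0 ≤ (x + y).orderTop from
    le_trans (le_min hx hy) min_orderTop_le_orderTop_add
  neg_mem' {x} hx := show 0 ≤ (-x).orderTop by simpa [orderTop_neg] using hx
  mul_mem' {x y} hx hy := show 0 ≤ (x * y).orderTop from
    le_trans (add_nonneg hx hy) orderTop_add_le_mul

theorem mem_A_iff {x : HahnSeries ℚ K} : x ∈ A K ↔ 0 ≤ x.orderTop :=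
  ⟨fun h => h, fun h => h⟩

theorem algebraMap_eq_single (a : K) :
    algebraMap K (HahnSeries ℚ K) a = HahnSeries.single (0:ℚ) a := by
  rw [HahnSeries.algebraMap_apply', PowerSeries.algebraMap_apply, HahnSeries.ofPowerSeries_C, HahnSeries.C_apply]
  simp

theorem coeff0_mul {x y : HahnSeries ℚ K} (hx : 0 ≤ x.orderTop) (hy : 0 ≤ y.orderTop) :
    (x * y).coeff 0 = x.coeff 0 * y.coeff 0 := by
  by_cases hx0 : x = 0
  · simp [hx0]
  by_cases hy0 : y = 0
  · simp [hy0]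
  rw [← order_eq_orderTop_of_ne_zero hx0] at hx
  rw [← order_eq_orderTop_of_ne_zero hy0] at hy
  have hx' : (0:ℚ) ≤ x.order := by exact_mod_cast hx
  have hy' : (0:ℚ) ≤ y.order := by exact_mod_cast hy
  rcases hx'.lt_or_eq with h | h
  · rw [coeff_eq_zero_of_lt_order (by rw [order_mul hx0 hy0]; positivity),
      coeff_eq_zero_of_lt_order h, zero_mul]
  · rcases hy'.lt_or_eq with h2 | h2
    · rw [coeff_eq_zero_of_lt_order (by rw [order_mul hx0 hy0]; rw [← h]; simpa using h2),
        coeff_eq_zero_of_lt_order h2, mul_zero]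
    · have := coeff_mul_order_add_order x y
      rw [leadingCoeff_eq, leadingCoeff_eq] at this
      rwa [← h, ← h2, add_zero] at this

variable (K) in
/-- Constant-coefficient ring hom on bounded series. -/
def ρ : A K →+* K where
  toFun x := (x : HahnSeries ℚ K).coeff 0
  map_one' := by simp [HahnSeries.coeff_one]
  map_mul' x y := coeff0_mul (mem_A_iff.mp x.2) (mem_A_iff.mp y.2)
  map_zero' := rfl
  map_add' x y := by simp [HahnSeries.coeff_add]

variable (K) in
noncomputable def ι : Polynomial K →+* HahnSeries ℚ K :=
  (Polynomial.aeval (HahnSeries.single (1 : ℚ) (1 : K))).toRingHom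

theorem ι_mem (p : Polynomial K) : ι K p ∈ A K := by
  induction p using Polynomial.induction_on with
  | C a =>
    have : ι K (Polynomial.C a) = HahnSeries.single (0:ℚ) a := by
      simp [ι, Polynomial.aeval_C, algebraMap_eq_single]
    rw [mem_A_iff, this]
    exact le_trans (le_of_eq WithTop.coe_zero.symm) orderTop_single_le
  | add p q hp hq => rw [map_add]; exact add_mem hp hq
  | monomial n a hp =>
    have : (Polynomial.C a * Polynomial.X ^ (n+1) : Polynomial K)
        = (Polynomial.C a * Polynomial.X ^ n) * Polynomial.X := by ring
    rw [this, map_mul]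
    refine mul_mem hp ?_
    have : ι K Polynomial.X = HahnSeries.single (1:ℚ) 1 := by simp [ι]
    rw [mem_A_iff, this]
    exact le_trans (le_of_eq WithTop.coe_zero.symm)
      (le_trans (WithTop.coe_le_coe.mpr zero_le_one) orderTop_single_le)

variable (K) in
noncomputable def ιA : Polynomial K →+* A K :=
  (ι K).codRestrict (A K) ι_mem

theorem rho_comp_iA : (ρ K).comp (ιA K) = Polynomial.evalRingHom (0 : K) := by
  apply Polynomial.ringHom_ext
  · intro a
    show ((ιA K (Polynomial.C a) : HahnSeries ℚ K)).coeff 0 = _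
    have : (ιA K (Polynomial.C a) : HahnSeries ℚ K) = HahnSeries.single (0:ℚ) a := by
      show ι K (Polynomial.C a) = _
      simp [ι, Polynomial.aeval_C, algebraMap_eq_single]
    simp [this, coeff_single_same]
  · show ((ιA K Polynomial.X : HahnSeries ℚ K)).coeff 0 = _
    have : (ιA K Polynomial.X : HahnSeries ℚ K) = HahnSeries.single (1:ℚ) 1 := by
      show ι K Polynomial.X = _
      simp [ι]
    simp [this, coeff_single_of_ne]

set_option maxHeartbeats 1000000 in
theorem taylor {n : ℕ} (Φ Δ : Fin n → A K) (f : MvPolynomial (Fin n) (Polynomial K)) :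
    ∃ E : A K, E ∈ Ideal.span (Set.range fun q : Fin n × Fin n => Δ q.1 * Δ q.2) ∧
      eval₂ (ιA K) (fun j => Φ j + Δ j) f
        = eval₂ (ιA K) Φ f + (∑ c, eval₂ (ιA K) Φ (pderiv c f) * Δ c) + E := by
  induction f using MvPolynomial.induction_on with
  | C a => exact ⟨0, Ideal.zero_mem _, by simp [eval₂_C, pderiv_C]⟩
  | add p q hp hq =>
    obtain ⟨E1, hE1, h1⟩ := hp
    obtain ⟨E2, hE2, h2⟩ := hq
    refine ⟨E1 + E2, Ideal.add_mem _ hE1 hE2, ?_⟩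
    rw [eval₂_add, eval₂_add, h1, h2]
    simp only [map_add, eval₂_add, add_mul, Finset.sum_add_distrib]
    ring
  | mul_X p c hp =>
    obtain ⟨E, hE, h⟩ := hp
    refine ⟨(∑ d, eval₂ (ιA K) Φ (pderiv d p) * Δ d) * Δ c + E * (Φ c + Δ c), ?_, ?_⟩
    · apply Ideal.add_mem
      · rw [Finset.sum_mul]
        refine Ideal.sum_mem _ fun d _ => ?_
        have hrw : eval₂ (ιA K) Φ (pderiv d p) * Δ d * Δ c
            = eval₂ (ιA K) Φ (pderiv d p) * (Δ d * Δ c) := by ring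
        rw [hrw]
        exact Ideal.mul_mem_left _ _ (Ideal.subset_span ⟨(d, c), rfl⟩)
      · exact Ideal.mul_mem_right _ _ hE
    · have hpd : ∀ d : Fin n, eval₂ (ιA K) Φ (pderiv d (p * X c))
          = eval₂ (ιA K) Φ (pderiv d p) * Φ c
            + eval₂ (ιA K) Φ p * (if c = d then 1 else 0) := by
        intro d
        rw [pderiv_mul, eval₂_add, eval₂_mul, eval₂_mul, eval₂_X, pderiv_X]
        congr 1
        by_cases hdc : c = d
        · subst hdc; simp
        · simp [Pi.single_apply, hdc, Ne.symm hdc]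
      have hsum : (∑ d, eval₂ (ιA K) Φ (pderiv d (p * X c)) * Δ d)
          = (∑ d, eval₂ (ιA K) Φ (pderiv d p) * Δ d) * Φ c + eval₂ (ιA K) Φ p * Δ c := by
        simp only [hpd, add_mul, Finset.sum_add_distrib, Finset.sum_mul]
        congr 1
        · apply Finset.sum_congr rfl; intro d _; ring
        · rw [Finset.sum_eq_single c]
          · simp
          · intro d _ hdc; simp [Ne.symm hdc]
          · intro hc; exact absurd (Finset.mem_univ c) hc
      rw [hsum, eval₂_mul, eval₂_mul, eval₂_X, eval₂_X, h]
      ring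

end Stmt11Aux

set_option maxHeartbeats 2000000 in
set_option synthInstance.maxHeartbeats 200000 in
open Matrix in
/-- Distinct bounded Puiseux roots of `B` with invertible limit Jacobian have
distinct limits at `T = 0`: if `Φ, Φ'` are bounded Puiseux-series roots of the
system `B = (b₁,…,b_m) ⊆ K[T][X]`, with the same limit `φ` at `T = 0`, and the
Jacobian of some `n` of the polynomials `bᵢ(0,·)` is invertible at `φ`, then
`Φ = Φ'`. -/
theorem stmt11 (K : Type*) [Field K] [IsAlgClosed K] [CharZero K] (n m : ℕ)
    (b : Fin m → MvPolynomial (Fin n) (Polynomial K))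
    (Φ Φ' : Fin n → HahnSeries ℚ K)
    (hroot : ∀ i, evalSeries Φ (b i) = 0) (hroot' : ∀ i, evalSeries Φ' (b i) = 0)
    (hbdd : ∀ j, ∀ q ∈ (Φ j).support, (0 : ℚ) ≤ q)
    (hbdd' : ∀ j, ∀ q ∈ (Φ' j).support, (0 : ℚ) ≤ q)
    (hPui : ∀ j, ∃ N : ℕ, 0 < N ∧ ∀ q ∈ (Φ j).support, ∃ z : ℤ, q = (z : ℚ) / N)
    (hPui' : ∀ j, ∃ N : ℕ, 0 < N ∧ ∀ q ∈ (Φ' j).support, ∃ z : ℤ, q = (z : ℚ) / N)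
    (hlim : ∀ j, (Φ j).coeff 0 = (Φ' j).coeff 0)
    (hjac : ∃ sel : Fin n → Fin m, Function.Injective sel ∧
      (Matrix.of fun (r c : Fin n) =>
        MvPolynomial.eval (fun j => (Φ j).coeff 0)
          (MvPolynomial.pderiv c
            (MvPolynomial.map (Polynomial.evalRingHom (0 : K)) (b (sel r))))).det ≠ 0) :
    Φ = Φ' := by
  classical
  by_contra hne
  obtain ⟨jne, hjne⟩ := Function.ne_iff.mp hne
  obtain ⟨sel, selinj, hdet⟩ := hjac
  haveI : Nonempty (Fin n) := ⟨jne⟩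
  set v := HahnSeries.addVal ℚ K with hv
  have hΦA : ∀ j, Φ j ∈ Stmt11Aux.A K := fun j =>
    Stmt11Aux.mem_A_iff.mpr (Stmt11Aux.orderTop_nonneg_of_support (hbdd j))
  have hΦ'A : ∀ j, Φ' j ∈ Stmt11Aux.A K := fun j =>
    Stmt11Aux.mem_A_iff.mpr (Stmt11Aux.orderTop_nonneg_of_support (hbdd' j))
  set Φa : Fin n → Stmt11Aux.A K := fun j => ⟨Φ j, hΦA j⟩ with hΦa
  set Φ'a : Fin n → Stmt11Aux.A K := fun j => ⟨Φ' j, hΦ'A j⟩ with hΦ'a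
  set Δ : Fin n → Stmt11Aux.A K := fun j => Φ'a j - Φa j with hΔ
  -- coercion of eval₂ over A
  have hcoe : ∀ (Ψ : Fin n → HahnSeries ℚ K) (hΨ : ∀ j, Ψ j ∈ Stmt11Aux.A K)
      (f : MvPolynomial (Fin n) (Polynomial K)),
      ((MvPolynomial.eval₂ (Stmt11Aux.ιA K) (fun j => (⟨Ψ j, hΨ j⟩ : Stmt11Aux.A K)) f :
        Stmt11Aux.A K) : HahnSeries ℚ K) = evalSeries Ψ f := by
    intro Ψ hΨ f
    rw [show (((MvPolynomial.eval₂ (Stmt11Aux.ιA K) (fun j => (⟨Ψ j, hΨ j⟩ : Stmt11Aux.A K)) f :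
        Stmt11Aux.A K)) : HahnSeries ℚ K)
      = (Stmt11Aux.A K).subtype (MvPolynomial.eval₂ (Stmt11Aux.ιA K)
          (fun j => (⟨Ψ j, hΨ j⟩ : Stmt11Aux.A K)) f) from rfl,
      MvPolynomial.eval₂_comp_left ((Stmt11Aux.A K).subtype) (Stmt11Aux.ιA K) _ f]
    rfl
  -- roots over A
  have hrootA : ∀ i, MvPolynomial.eval₂ (Stmt11Aux.ιA K) Φa (b i) = 0 := fun i =>
    Subtype.ext (by rw [hΦa]; rw [hcoe Φ hΦA (b i)]; exact hroot i)
  have hroot'A : ∀ i, MvPolynomial.eval₂ (Stmt11Aux.ιA K) Φ'a (b i) = 0 := fun i =>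
    Subtype.ext (by rw [hΦ'a]; rw [hcoe Φ' hΦ'A (b i)]; exact hroot' i)
  -- Taylor expansion
  have hΦ'aeq : (fun j => Φa j + Δ j) = Φ'a := by
    funext j; rw [hΔ]; ring
  choose E hEspan hEq using fun i => Stmt11Aux.taylor Φa Δ (b (sel i))
  have hlin : ∀ i, (∑ c, MvPolynomial.eval₂ (Stmt11Aux.ιA K) Φa
      (MvPolynomial.pderiv c (b (sel i))) * Δ c) = -(E i) := by
    intro i
    have h := hEq i
    rw [hΦ'aeq, hroot'A (sel i), hrootA (sel i), zero_add] at h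
    exact eq_neg_of_add_eq_zero_left h.symm
  -- the Jacobian matrix over A
  set M : Matrix (Fin n) (Fin n) (Stmt11Aux.A K) :=
    Matrix.of fun r c =>
      MvPolynomial.eval₂ (Stmt11Aux.ιA K) Φa (MvPolynomial.pderiv c (b (sel r))) with hM
  have hMv : M *ᵥ Δ = fun r => -(E r) := by
    funext r
    rw [Matrix.mulVec, dotProduct]
    exact hlin r
  have key : M.det • Δ = M.adjugate *ᵥ (fun r => -(E r)) := by
    rw [← hMv, Matrix.mulVec_mulVec, Matrix.adjugate_mul, Matrix.smul_mulVec,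
      Matrix.one_mulVec]
  -- the constant coefficient of the determinant is nonzero
  have hρev : ∀ f : MvPolynomial (Fin n) (Polynomial K),
      Stmt11Aux.ρ K (MvPolynomial.eval₂ (Stmt11Aux.ιA K) Φa f)
        = MvPolynomial.eval (fun j => (Φ j).coeff 0)
            (MvPolynomial.map (Polynomial.evalRingHom (0:K)) f) := by
    intro f
    rw [MvPolynomial.eval₂_comp_left (Stmt11Aux.ρ K) (Stmt11Aux.ιA K) Φa f,
      Stmt11Aux.rho_comp_iA, MvPolynomial.eval₂_eq_eval_map]
    rfl
  have hdetA : Stmt11Aux.ρ K M.det ≠ 0 := by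
    rw [RingHom.map_det]
    have hMat : (Stmt11Aux.ρ K).mapMatrix M
        = Matrix.of fun (r c : Fin n) =>
            MvPolynomial.eval (fun j => (Φ j).coeff 0)
              (MvPolynomial.pderiv c
                (MvPolynomial.map (Polynomial.evalRingHom (0 : K)) (b (sel r)))) := by
      ext r c
      show Stmt11Aux.ρ K (M r c) = _
      simp only [Matrix.of_apply, hM]
      rw [MvPolynomial.pderiv_map]
      exact hρev (MvPolynomial.pderiv c (b (sel r)))
    rw [hMat]
    exact hdet
  -- valuations
  have hΔpos : ∀ j, 0 < v ((Δ j : HahnSeries ℚ K)) := by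
    intro j
    have hΔcoe : ((Δ j : HahnSeries ℚ K)) = Φ' j - Φ j := rfl
    rw [hv, HahnSeries.addVal_apply, hΔcoe]
    apply Stmt11Aux.orderTop_pos_of
    intro q hq
    rw [HahnSeries.coeff_sub]
    rcases hq.lt_or_eq with h | h
    · have h1 : (Φ j).coeff q = 0 := by
        by_contra hc
        exact absurd (hbdd j q ((Φ j).mem_support q |>.2 hc)) (not_le.mpr h)
      have h2 : (Φ' j).coeff q = 0 := by
        by_contra hc
        exact absurd (hbdd' j q ((Φ' j).mem_support q |>.2 hc)) (not_le.mpr h)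
      rw [h1, h2, sub_zero]
    · subst h
      rw [← hlim j, sub_self]
  set μ := Finset.univ.inf (fun j => v ((Δ j : HahnSeries ℚ K))) with hμ
  have hμpos : 0 < μ := (Finset.lt_inf_iff (by norm_num)).mpr fun j _ => hΔpos j
  obtain ⟨j₀, -, hj₀⟩ := Finset.exists_mem_eq_inf Finset.univ Finset.univ_nonempty
    (fun j => v ((Δ j : HahnSeries ℚ K)))
  have hμtop : μ ≠ ⊤ := by
    intro htop
    have hΔjne : ((Δ jne : HahnSeries ℚ K)) ≠ 0 := sub_ne_zero.mpr (Ne.symm hjne)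
    have hle : μ ≤ v ((Δ jne : HahnSeries ℚ K)) :=
      Finset.inf_le (Finset.mem_univ jne)
    rw [htop, top_le_iff, hv, HahnSeries.addVal_apply, HahnSeries.orderTop_eq_top] at hle
    exact hΔjne hle
  -- bound on the error terms
  have hspan : ∀ x ∈ Ideal.span (Set.range fun q : Fin n × Fin n => Δ q.1 * Δ q.2),
      μ + μ ≤ v ((x : HahnSeries ℚ K)) := by
    intro x hx
    induction hx using Submodule.span_induction with
    | mem y hy =>
      obtain ⟨q, rfl⟩ := hy
      rw [show ((((Δ q.1 * Δ q.2) : Stmt11Aux.A K)) : HahnSeries ℚ K)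
          = ((Δ q.1 : HahnSeries ℚ K)) * ((Δ q.2 : HahnSeries ℚ K)) from rfl, v.map_mul]
      exact add_le_add (Finset.inf_le (Finset.mem_univ q.1)) (Finset.inf_le (Finset.mem_univ q.2))
    | zero => rw [show (((0 : Stmt11Aux.A K)) : HahnSeries ℚ K) = 0 from rfl, v.map_zero]; exact le_top
    | add y z hy hz hy' hz' =>
      rw [show (((y + z : Stmt11Aux.A K)) : HahnSeries ℚ K)
          = ((y : HahnSeries ℚ K)) + ((z : HahnSeries ℚ K)) from rfl]
      exact v.map_le_add hy' hz'
    | smul r y hy hy' =>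
      rw [smul_eq_mul, show (((r * y : Stmt11Aux.A K)) : HahnSeries ℚ K)
          = ((r : HahnSeries ℚ K)) * ((y : HahnSeries ℚ K)) from rfl, v.map_mul]
      calc μ + μ = 0 + (μ + μ) := (zero_add _).symm
        _ ≤ v ((r : HahnSeries ℚ K)) + v ((y : HahnSeries ℚ K)) := by
            refine add_le_add ?_ hy'
            rw [hv, HahnSeries.addVal_apply]
            exact Stmt11Aux.mem_A_iff.mp r.2
  -- valuation of the determinant is zero
  set d : Stmt11Aux.A K := M.det with hd
  have hdco : ((d : HahnSeries ℚ K)).coeff 0 ≠ 0 := hdetA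
  have hdet0 : v ((d : HahnSeries ℚ K)) = 0 := by
    apply le_antisymm
    · have := HahnSeries.addVal_le_of_coeff_ne_zero (x := (d : HahnSeries ℚ K)) (g := 0) hdco
      simpa [hv] using this
    · rw [hv, HahnSeries.addVal_apply]
      exact Stmt11Aux.mem_A_iff.mp d.2
  -- put everything together
  have heq : ((d : HahnSeries ℚ K)) * ((Δ j₀ : HahnSeries ℚ K))
      = ∑ r, ((M.adjugate j₀ r : HahnSeries ℚ K)) * ((-(E r) : Stmt11Aux.A K) : HahnSeries ℚ K) := by
    have h := congrFun key j₀
    rw [Pi.smul_apply, smul_eq_mul] at h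
    have h2 : d * Δ j₀ = ∑ r, M.adjugate j₀ r * (-(E r)) := by
      rw [hd]
      calc M.det * Δ j₀ = (M.adjugate *ᵥ fun r => -(E r)) j₀ := h
        _ = ∑ r, M.adjugate j₀ r * (-(E r)) := by rw [Matrix.mulVec, dotProduct]
    calc ((d : HahnSeries ℚ K)) * ((Δ j₀ : HahnSeries ℚ K))
        = (((d * Δ j₀ : Stmt11Aux.A K)) : HahnSeries ℚ K) := rfl
      _ = (((∑ r, M.adjugate j₀ r * (-(E r)) : Stmt11Aux.A K)) : HahnSeries ℚ K) := by rw [h2]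
      _ = ∑ r, ((M.adjugate j₀ r : HahnSeries ℚ K)) * ((-(E r) : Stmt11Aux.A K) : HahnSeries ℚ K) := by
          rw [show ((((∑ r, M.adjugate j₀ r * (-(E r)) : Stmt11Aux.A K))) : HahnSeries ℚ K)
            = (Stmt11Aux.A K).subtype (∑ r, M.adjugate j₀ r * (-(E r))) from rfl,
            map_sum]
          rfl
  have hL : v (((d : HahnSeries ℚ K)) * ((Δ j₀ : HahnSeries ℚ K))) = μ := by
    rw [v.map_mul, hdet0, zero_add, hμ, hj₀]
  have hR : μ + μ ≤ v (∑ r, ((M.adjugate j₀ r : HahnSeries ℚ K))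
      * ((-(E r) : Stmt11Aux.A K) : HahnSeries ℚ K)) := by
    apply v.map_le_sum
    intro r _
    rw [v.map_mul]
    calc μ + μ = 0 + (μ + μ) := (zero_add _).symm
      _ ≤ v ((M.adjugate j₀ r : HahnSeries ℚ K)) + v ((-(E r) : Stmt11Aux.A K) : HahnSeries ℚ K) := by
          refine add_le_add ?_ ?_
          · rw [hv, HahnSeries.addVal_apply]
            exact Stmt11Aux.mem_A_iff.mp (M.adjugate j₀ r).2
          · rw [show (((-(E r) : Stmt11Aux.A K)) : HahnSeries ℚ K)
                = -((E r : HahnSeries ℚ K)) from rfl, v.map_neg]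
            exact hspan (E r) (hEspan r)
  rw [← heq, hL] at hR
  have : μ + 0 < μ + μ := WithTop.add_lt_add_left hμtop hμpos
  rw [add_zero] at this
  exact absurd (this.trans_le hR) (lt_irrefl μ)
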